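/- Let G act on a set X and suppose there is ε > 0 and Q ⊆ G such that for every nonnegative f ∈ ℓ¹(X) with ‖f‖₁ = 1, sup_{g∈Q} ‖g·f − f‖₁ ≥ ε. Then for every f ∈ ℓ²(X) with ‖f‖₂ = 1, sup_{g∈Q} ‖g·f − f‖₂ ≥ ε/2. -/

import Mathlib

private lemma cs_tsum {X : Type*} (a b : X → ℝ) (ha0 : ∀ x, 0 ≤ a x) (hb0 : ∀ x, 0 ≤ b x)
    (hab : Summable fun x => a x * b x)
    (ha : Summable fun x => a x ^ 2) (hb : Summable fun x => b x ^ 2) :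
    ∑' x, a x * b x ≤ Real.sqrt (∑' x, a x ^ 2) * Real.sqrt (∑' x, b x ^ 2) := by
  refine Summable.tsum_le_of_sum_le hab fun s => ?_
  have h1 : (∑ i ∈ s, a i * b i) ^ 2 ≤ (∑ i ∈ s, a i ^ 2) * ∑ i ∈ s, b i ^ 2 :=
    Finset.sum_mul_sq_le_sq_mul_sq s a b
  have h2 : (∑ i ∈ s, a i ^ 2) ≤ ∑' x, a x ^ 2 :=
    Summable.sum_le_tsum s (fun i _ => sq_nonneg _) ha
  have h3 : (∑ i ∈ s, b i ^ 2) ≤ ∑' x, b x ^ 2 :=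
    Summable.sum_le_tsum s (fun i _ => sq_nonneg _) hb
  have hs0 : 0 ≤ ∑ i ∈ s, a i * b i :=
    Finset.sum_nonneg fun i _ => mul_nonneg (ha0 i) (hb0 i)
  have hsb : 0 ≤ ∑ i ∈ s, b i ^ 2 := Finset.sum_nonneg fun i _ => sq_nonneg _
  have hsa : 0 ≤ ∑ i ∈ s, a i ^ 2 := Finset.sum_nonneg fun i _ => sq_nonneg _
  calc ∑ i ∈ s, a i * b i = Real.sqrt ((∑ i ∈ s, a i * b i) ^ 2) := (Real.sqrt_sq hs0).symm
    _ ≤ Real.sqrt ((∑' x, a x ^ 2) * ∑' x, b x ^ 2) := by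
        apply Real.sqrt_le_sqrt
        exact h1.trans (mul_le_mul h2 h3 hsb (le_trans hsa h2))
    _ = Real.sqrt (∑' x, a x ^ 2) * Real.sqrt (∑' x, b x ^ 2) := by
        exact Real.sqrt_mul (le_trans hsa h2) _

/-- If a group action on `X` moves every normalized nonnegative `ℓ¹` function by at least `ε`
along some element of `Q`, then it moves every unit vector of `ℓ²(X)` by at least `ε/2`. -/
theorem ell_two_from_ell_one {G X : Type*} [Group G] [MulAction G X]
    (Q : Set G) (ε : ℝ) (hε : 0 < ε)
    (h : ∀ f : X → ℝ, (∀ x, 0 ≤ f x) → Summable f → ∑' x, f x = 1 →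
      ε ≤ ⨆ g : Q, ∑' x, |f ((g : G)⁻¹ • x) - f x|) :
    ∀ f : X → ℂ, Summable (fun x => ‖f x‖ ^ 2) → ∑' x, ‖f x‖ ^ 2 = 1 →
      ε / 2 ≤ ⨆ g : Q, Real.sqrt (∑' x, ‖f ((g : G)⁻¹ • x) - f x‖ ^ 2) := by
  intro f hs h1
  have hF0 : ∀ x, (0:ℝ) ≤ ‖f x‖ ^ 2 := fun x => sq_nonneg _
  have hmain := h (fun x => ‖f x‖ ^ 2) hF0 hs h1
  by_cases hQ : Nonempty Q
  case neg =>
    exfalso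
    haveI : IsEmpty Q := not_nonempty_iff.mp hQ
    rw [iSup_of_empty' (α := ℝ), Real.sSup_empty] at hmain
    linarith
  -- per-element summability facts
  have hsg : ∀ g : G, Summable fun x => ‖f (g⁻¹ • x)‖ ^ 2 := by
    intro g
    have := (Equiv.summable_iff (MulAction.toPerm (g⁻¹ : G)) (f := fun x => ‖f x‖ ^ 2)).2 hs
    simpa [Function.comp_def] using this
  have htg : ∀ g : G, ∑' x, ‖f (g⁻¹ • x)‖ ^ 2 = 1 := by
    intro g
    have := Equiv.tsum_eq (MulAction.toPerm (g⁻¹ : G)) (fun x => ‖f x‖ ^ 2)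
    simp only [MulAction.toPerm_apply] at this
    rw [this, h1]
  have hdiff : ∀ g : G, Summable fun x => ‖f (g⁻¹ • x) - f x‖ ^ 2 := by
    intro g
    apply Summable.of_nonneg_of_le (fun x => sq_nonneg _)
      (f := fun x => 2 * ‖f (g⁻¹ • x)‖ ^ 2 + 2 * ‖f x‖ ^ 2)
    · intro x
      calc ‖f (g⁻¹ • x) - f x‖ ^ 2 ≤ (‖f (g⁻¹ • x)‖ + ‖f x‖) ^ 2 := by
            apply pow_le_pow_left₀ (norm_nonneg _) (norm_sub_le _ _)
        _ ≤ 2 * ‖f (g⁻¹ • x)‖ ^ 2 + 2 * ‖f x‖ ^ 2 := by nlinarith [sq_nonneg (‖f (g⁻¹ • x)‖ - ‖f x‖)]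
    · exact (((hsg g).mul_left 2).add (hs.mul_left 2))
  have hsum2 : ∀ g : G, Summable fun x => (‖f (g⁻¹ • x)‖ + ‖f x‖) ^ 2 := by
    intro g
    apply Summable.of_nonneg_of_le (fun x => sq_nonneg _)
      (f := fun x => 2 * ‖f (g⁻¹ • x)‖ ^ 2 + 2 * ‖f x‖ ^ 2)
    · intro x; nlinarith [sq_nonneg (‖f (g⁻¹ • x)‖ - ‖f x‖)]
    · exact (((hsg g).mul_left 2).add (hs.mul_left 2))
  have hsum2le : ∀ g : G, ∑' x, (‖f (g⁻¹ • x)‖ + ‖f x‖) ^ 2 ≤ 4 := by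
    intro g
    have : ∑' x, (‖f (g⁻¹ • x)‖ + ‖f x‖) ^ 2 ≤ ∑' x, (2 * ‖f (g⁻¹ • x)‖ ^ 2 + 2 * ‖f x‖ ^ 2) := by
      apply Summable.tsum_le_tsum _ (hsum2 g) (((hsg g).mul_left 2).add (hs.mul_left 2))
      intro x; nlinarith [sq_nonneg (‖f (g⁻¹ • x)‖ - ‖f x‖)]
    rw [Summable.tsum_add ((hsg g).mul_left 2) (hs.mul_left 2), tsum_mul_left, tsum_mul_left,
      htg g, h1] at this
    linarith
  -- key inequality per g
  have key : ∀ g : G, ∑' x, |‖f (g⁻¹ • x)‖ ^ 2 - ‖f x‖ ^ 2| ≤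
      2 * Real.sqrt (∑' x, ‖f (g⁻¹ • x) - f x‖ ^ 2) := by
    intro g
    set a : X → ℝ := fun x => ‖f (g⁻¹ • x) - f x‖
    set b : X → ℝ := fun x => ‖f (g⁻¹ • x)‖ + ‖f x‖
    have hpt : ∀ x, |‖f (g⁻¹ • x)‖ ^ 2 - ‖f x‖ ^ 2| ≤ a x * b x := by
      intro x
      have h1' : |‖f (g⁻¹ • x)‖ ^ 2 - ‖f x‖ ^ 2| =
          |‖f (g⁻¹ • x)‖ - ‖f x‖| * (‖f (g⁻¹ • x)‖ + ‖f x‖) := by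
        rw [show ‖f (g⁻¹ • x)‖ ^ 2 - ‖f x‖ ^ 2 =
          (‖f (g⁻¹ • x)‖ - ‖f x‖) * (‖f (g⁻¹ • x)‖ + ‖f x‖) by ring, abs_mul,
          abs_of_nonneg (show (0:ℝ) ≤ ‖f (g⁻¹ • x)‖ + ‖f x‖ by positivity)]
      rw [h1']
      exact mul_le_mul_of_nonneg_right (abs_norm_sub_norm_le _ _) (by positivity)
    have hab : Summable fun x => a x * b x := by
      apply Summable.of_nonneg_of_le (fun x => mul_nonneg (norm_nonneg _) (by positivity))
        (f := fun x => (a x ^ 2 + b x ^ 2))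
      · intro x; nlinarith [sq_nonneg (a x - b x)]
      · exact (hdiff g).add (hsum2 g)
    have habs : Summable fun x => |‖f (g⁻¹ • x)‖ ^ 2 - ‖f x‖ ^ 2| :=
      ((hsg g).sub hs).abs
    calc ∑' x, |‖f (g⁻¹ • x)‖ ^ 2 - ‖f x‖ ^ 2| ≤ ∑' x, a x * b x :=
          Summable.tsum_le_tsum hpt habs hab
      _ ≤ Real.sqrt (∑' x, a x ^ 2) * Real.sqrt (∑' x, b x ^ 2) :=
          cs_tsum a b (fun x => norm_nonneg _) (fun x => by positivity) hab (hdiff g) (hsum2 g)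
      _ ≤ Real.sqrt (∑' x, a x ^ 2) * 2 := by
          apply mul_le_mul_of_nonneg_left _ (Real.sqrt_nonneg _)
          calc Real.sqrt (∑' x, b x ^ 2) ≤ Real.sqrt 4 := Real.sqrt_le_sqrt (hsum2le g)
            _ = 2 := by rw [show (4:ℝ) = 2 ^ 2 by norm_num, Real.sqrt_sq (by norm_num)]
      _ = 2 * Real.sqrt (∑' x, a x ^ 2) := mul_comm _ _
  -- bound the sqrt family
  have hsqrtle : ∀ g : G, Real.sqrt (∑' x, ‖f (g⁻¹ • x) - f x‖ ^ 2) ≤ 2 := by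
    intro g
    have hle4 : ∑' x, ‖f (g⁻¹ • x) - f x‖ ^ 2 ≤ 4 := by
      refine le_trans (Summable.tsum_le_tsum (fun x => ?_) (hdiff g) (hsum2 g)) ?_
      · exact pow_le_pow_left₀ (norm_nonneg _) (norm_sub_le _ _) 2
      · exact hsum2le g
    calc Real.sqrt (∑' x, ‖f (g⁻¹ • x) - f x‖ ^ 2) ≤ Real.sqrt 4 := Real.sqrt_le_sqrt hle4
      _ = 2 := by rw [show (4:ℝ) = 2 ^ 2 by norm_num, Real.sqrt_sq (by norm_num)]
  have hbdd : BddAbove (Set.range fun g : Q => Real.sqrt (∑' x, ‖f ((g : G)⁻¹ • x) - f x‖ ^ 2)) := by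
    refine ⟨2, ?_⟩
    rintro y ⟨g, rfl⟩
    exact hsqrtle g
  have hbdd2 : BddAbove (Set.range fun g : Q =>
      2 * Real.sqrt (∑' x, ‖f ((g : G)⁻¹ • x) - f x‖ ^ 2)) := by
    refine ⟨4, ?_⟩
    rintro y ⟨g, rfl⟩
    have := hsqrtle (g : G)
    linarith
  have step1 : ε ≤ ⨆ g : Q, 2 * Real.sqrt (∑' x, ‖f ((g : G)⁻¹ • x) - f x‖ ^ 2) :=
    hmain.trans (ciSup_mono hbdd2 fun g => key (g : G))
  have step2 : (⨆ g : Q, 2 * Real.sqrt (∑' x, ‖f ((g : G)⁻¹ • x) - f x‖ ^ 2)) ≤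
      2 * ⨆ g : Q, Real.sqrt (∑' x, ‖f ((g : G)⁻¹ • x) - f x‖ ^ 2) := by
    apply ciSup_le
    intro g
    have : Real.sqrt (∑' x, ‖f ((g : G)⁻¹ • x) - f x‖ ^ 2) ≤
        ⨆ g : Q, Real.sqrt (∑' x, ‖f ((g : G)⁻¹ • x) - f x‖ ^ 2) := le_ciSup hbdd g
    linarith
  linarith
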